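/- arXiv:1204.4565 — 4 statements merged into one kernel-verified Lean document; each statement's English description precedes it below -/
import Mathlib

section
/- Let B ⊆ V be a set of vertices (the Byzantine processors) and let c > 0 be an integer. Let V_c = { v ∈ V : for every b ∈ B, the graph distance between v and b in G is strictly greater than c }. Suppose the configuration pref is c-contained, i.e., every v ∈ V_c satisfies spec(v). Let V* = V_c ∪ { v ∈ V \ V_c : ∃ u ∈ V_c, pref v = some u ∧ pref u = some v }. Then the set of edges of M(pref) having both endpoints in V* is a maximal matching of the subgraph of G induced by V*. -/
variable {V : Type*} [Fintype V] [DecidableEq V]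

/-- A configuration: every preference points to a neighbor. -/
def IsConfig (G : SimpleGraph V) (pref : V → Option V) : Prop :=
  ∀ v u : V, pref v = some u → G.Adj v u

/-- `v` proposed to a neighbor `u` which has not answered yet. -/
def Proposition (G : SimpleGraph V) (pref : V → Option V) (v : V) : Prop :=
  ∃ u : V, G.Adj v u ∧ pref v = some u ∧ pref u = none

/-- `v` proposed to a neighbor `u` which proposed `v` back. -/
def Married (G : SimpleGraph V) (pref : V → Option V) (v : V) : Prop :=
  ∃ u : V, G.Adj v u ∧ pref v = some u ∧ pref u = some v

/-- `v` proposed to a neighbor `u` which proposed someone else. -/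
def Condemned (G : SimpleGraph V) (pref : V → Option V) (v : V) : Prop :=
  ∃ u : V, G.Adj v u ∧ ∃ w : V, pref v = some u ∧ pref u = some w ∧ w ≠ v

/-- `v` has no hope of marriage: all its neighbors are married. -/
def Dead (G : SimpleGraph V) (pref : V → Option V) (v : V) : Prop :=
  pref v = none ∧ ∀ u : V, G.Adj v u → Married G pref u

/-- `v` proposed no one and some neighbor is not married. -/
def Single (G : SimpleGraph V) (pref : V → Option V) (v : V) : Prop :=
  pref v = none ∧ ∃ u : V, G.Adj v u ∧ ¬ Married G pref u

/-- Local legitimacy predicate. -/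
def Spec (G : SimpleGraph V) (pref : V → Option V) (v : V) : Prop :=
  Married G pref v ∨ Dead G pref v

/-- The matching set `M(pref)`: edges of `G` whose endpoints prefer each other. -/
def matchSet (G : SimpleGraph V) (pref : V → Option V) : Set (Sym2 V) :=
  {e | e ∈ G.edgeSet ∧ ∃ u w : V, e = s(u, w) ∧ pref u = some w ∧ pref w = some u}

/-- `M` is a matching of `H`: a set of edges of `H` such that every vertex is
incident to at most one edge of `M`. -/
def IsMatchingOf (H : SimpleGraph V) (M : Set (Sym2 V)) : Prop :=
  M ⊆ H.edgeSet ∧ ∀ v : V, ∀ e ∈ M, ∀ f ∈ M, v ∈ e → v ∈ f → e = f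

/-- `M` is a maximal matching of `H`: no matching of `H` strictly contains it. -/
def IsMaximalMatchingOf (H : SimpleGraph V) (M : Set (Sym2 V)) : Prop :=
  IsMatchingOf H M ∧ ¬ ∃ M' : Set (Sym2 V), IsMatchingOf H M' ∧ M ⊂ M'

/-- The subgraph of `G` induced by the vertex set `S` (as a graph on `V`). -/
def inducedOn (G : SimpleGraph V) (S : Set V) : SimpleGraph V where
  Adj u v := G.Adj u v ∧ u ∈ S ∧ v ∈ S
  symm := ⟨fun u v ⟨h, hu, hv⟩ => ⟨h.symm, hv, hu⟩⟩
  loopless := ⟨fun v ⟨h, _, _⟩ => G.loopless.irrefl v h⟩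

/-- Guard of the marriage rule of SSMM. -/
def GuardM (G : SimpleGraph V) (pref : V → Option V) (v : V) : Prop :=
  pref v = none ∧ ∃ u : V, G.Adj v u ∧ pref u = some v

/-- Guard of the seduction rule of SSMM. -/
def GuardS (G : SimpleGraph V) (pref : V → Option V) (v : V) : Prop :=
  pref v = none ∧ (∀ u : V, G.Adj v u → pref u ≠ some v) ∧
    ∃ u : V, G.Adj v u ∧ pref u = none

/-- Guard of the abandonment rule of SSMM. -/
def GuardA (G : SimpleGraph V) (pref : V → Option V) (v : V) : Prop :=
  ∃ u : V, G.Adj v u ∧ pref v = some u ∧ pref u ≠ some v ∧ pref u ≠ none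

/-- A vertex is activable if at least one guard of SSMM holds at it. -/
def Activable (G : SimpleGraph V) (pref : V → Option V) (v : V) : Prop :=
  GuardM G pref v ∨ GuardS G pref v ∨ GuardA G pref v

/-- in a `c`-contained configuration, the restriction of `M(pref)`
to `V*` is a maximal matching of the subgraph of `G` induced by `V*`. -/
theorem contained_maximal_matching (G : SimpleGraph V) (hconn : G.Connected)
    (pref : V → Option V) (hconf : IsConfig G pref)
    (B : Set V) (c : ℕ) (hc : 0 < c)
    (Vc : Set V) (hVc : Vc = {v : V | ∀ b ∈ B, c < G.dist v b})
    (hcontained : ∀ v ∈ Vc, Spec G pref v)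
    (Vstar : Set V)
    (hVstar : Vstar = Vc ∪
      {v : V | v ∉ Vc ∧ ∃ u ∈ Vc, pref v = some u ∧ pref u = some v}) :
    IsMaximalMatchingOf (inducedOn G Vstar)
      {e ∈ matchSet G pref | ∀ w ∈ e, w ∈ Vstar} := by
  classical
  set M : Set (Sym2 V) := {e ∈ matchSet G pref | ∀ w ∈ e, w ∈ Vstar} with hM
  -- every vertex of Vstar is married or dead
  have spec_star : ∀ w ∈ Vstar, Married G pref w ∨ Dead G pref w := by
    intro w hw
    rw [hVstar] at hw
    rcases hw with hw | ⟨_, u, hu, hwu, huw⟩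
    · exact hcontained w hw
    · exact Or.inl ⟨u, hconf w u hwu, hwu, huw⟩
  -- partner of a married vertex of Vstar is in Vstar
  have married_star : ∀ w ∈ Vstar, Married G pref w →
      ∃ p, pref w = some p ∧ pref p = some w ∧ p ∈ Vstar := by
    intro w hw ⟨p, _, hwp, hpw⟩
    refine ⟨p, hwp, hpw, ?_⟩
    rw [hVstar] at hw ⊢
    rcases hw with hw | ⟨_, u, hu, hwu, huw⟩
    · by_cases hp : p ∈ Vc
      · exact Or.inl hp
      · exact Or.inr ⟨hp, w, hw, hpw, hwp⟩
    · have : u = p := by rw [hwu] at hwp; exact Option.some.inj hwp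
      exact Or.inl (this ▸ hu)
  -- marriage edges with a Vstar endpoint are in M
  have marriage_mem : ∀ w ∈ Vstar, ∀ p, pref w = some p → pref p = some w →
      p ∈ Vstar → s(w, p) ∈ M := by
    intro w hw p hwp hpw hp
    refine ⟨⟨(SimpleGraph.mem_edgeSet G).mpr (hconf w p hwp), w, p, rfl, hwp, hpw⟩, ?_⟩
    intro x hx
    rcases Sym2.mem_iff.mp hx with rfl | rfl
    · exact hw
    · exact hp
  -- edges of M determine the partner
  have key : ∀ e ∈ matchSet G pref, ∀ v, v ∈ e →
      ∃ p, pref v = some p ∧ e = s(v, p) := by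
    rintro e ⟨he, u, w, rfl, hu, hw⟩ v hv
    rcases Sym2.mem_iff.mp hv with rfl | rfl
    · exact ⟨w, hu, rfl⟩
    · exact ⟨u, hw, Sym2.eq_swap.symm⟩
  have hmatch : IsMatchingOf (inducedOn G Vstar) M := by
    constructor
    · rintro e ⟨⟨he, u, w, rfl, hu, hw⟩, hall⟩
      exact (SimpleGraph.mem_edgeSet (inducedOn G Vstar)).mpr
        ⟨(SimpleGraph.mem_edgeSet G).mp he,
         hall u (Sym2.mem_mk_left u w), hall w (Sym2.mem_mk_right u w)⟩
    · intro v e he f hf hve hvf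
      obtain ⟨p, hp, hep⟩ := key e he.1 v hve
      obtain ⟨q, hq, hfq⟩ := key f hf.1 v hvf
      have : p = q := Option.some.inj (hp ▸ hq ▸ rfl)
      rw [hep, hfq, this]
  refine ⟨hmatch, ?_⟩
  rintro ⟨M', hM', hsub, hne⟩
  obtain ⟨e, heM', heM⟩ := Set.not_subset.mp hne
  -- decompose e
  induction e using Sym2.ind with
  | _ u v =>
  obtain ⟨huv, hu, hv⟩ := hM'.1 heM'
  have hadj : G.Adj u v := huv
  have hnotmatch : s(u, v) ∉ matchSet G pref := by
    intro h
    exact heM ⟨h, fun x hx => by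
      rcases Sym2.mem_iff.mp hx with rfl | rfl
      · exact hu
      · exact hv⟩
  rcases spec_star u hu with hmar | ⟨hnone, hall⟩
  · obtain ⟨p, hup, hpu, hpV⟩ := married_star u hu hmar
    have hfM : s(u, p) ∈ M := marriage_mem u hu p hup hpu hpV
    have hfM' : s(u, p) ∈ M' := hsub hfM
    have heq : s(u, v) = s(u, p) :=
      hM'.2 u _ heM' _ hfM' (Sym2.mem_mk_left u v) (Sym2.mem_mk_left u p)
    rcases Sym2.eq_iff.mp heq with ⟨_, h2⟩ | ⟨h1, h2⟩
    · subst h2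
      exact hnotmatch ⟨(SimpleGraph.mem_edgeSet G).mpr hadj, u, v, rfl, hup, hpu⟩
    · exact G.loopless.irrefl u (h2 ▸ hadj)
  · have hmarv := hall v hadj
    obtain ⟨p, hvp, hpv, hpV⟩ := married_star v hv hmarv
    have hfM : s(v, p) ∈ M := marriage_mem v hv p hvp hpv hpV
    have hfM' : s(v, p) ∈ M' := hsub hfM
    have heq : s(u, v) = s(v, p) :=
      hM'.2 v _ heM' _ hfM' (Sym2.mem_mk_right u v) (Sym2.mem_mk_left v p)
    rcases Sym2.eq_iff.mp heq with ⟨h1, _⟩ | ⟨h1, _⟩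
    · exact G.loopless.irrefl u (h1 ▸ hadj)
    · rw [← h1, hnone] at hpv; exact Option.some_ne_none _ hpv.symm
end

section
/- For every configuration pref and every vertex v, if spec(v) holds (i.e., v is married or dead) then none of the three guards G_M(v), G_S(v), G_A(v) of the protocol SSMM is enabled at v; in particular a vertex satisfying spec is not activable. -/
variable {V : Type*} [Fintype V] [DecidableEq V]

/-- a vertex satisfying `spec` has none of the three guards of
SSMM enabled; in particular it is not activable. -/
theorem spec_not_activable (G : SimpleGraph V) (pref : V → Option V)
    (hconf : IsConfig G pref) (v : V) (hspec : Spec G pref v) :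
    (¬ GuardM G pref v ∧ ¬ GuardS G pref v ∧ ¬ GuardA G pref v) ∧
      ¬ Activable G pref v := by
  have key : ¬ GuardM G pref v ∧ ¬ GuardS G pref v ∧ ¬ GuardA G pref v := by
    rcases hspec with ⟨u, hadj, hvu, huv⟩ | ⟨hv, hall⟩
    · refine ⟨?_, ?_, ?_⟩
      · rintro ⟨h, -⟩; simp [hvu] at h
      · rintro ⟨h, -⟩; simp [hvu] at h
      · rintro ⟨w, -, hvw, hw1, -⟩
        rw [hvu] at hvw; injection hvw with h; subst h
        exact hw1 huv
    · refine ⟨?_, ?_, ?_⟩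
      · rintro ⟨-, u, hadj, huv⟩
        obtain ⟨w, -, huw, hwu⟩ := hall u hadj
        rw [huv] at huw; injection huw with h; subst h
        simp [hwu] at hv
      · rintro ⟨-, -, u, hadj, hun⟩
        obtain ⟨w, -, huw, -⟩ := hall u hadj
        simp [huw] at hun
      · rintro ⟨w, -, hvw, -⟩
        simp [hv] at hvw
  exact ⟨key, fun h => h.elim key.1 (fun h => h.elim key.2.1 key.2.2)⟩
end

section
/- If a configuration pref is terminal for the protocol SSMM, i.e., no vertex of G is activable (for every vertex v none of the guards G_M(v), G_S(v), G_A(v) holds), then every vertex v of G satisfies spec(v). -/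
variable {V : Type*} [Fintype V] [DecidableEq V]

/-- in a terminal configuration of SSMM (no vertex activable),
every vertex satisfies `spec`. -/
theorem terminal_spec (G : SimpleGraph V) (pref : V → Option V)
    (hconf : IsConfig G pref)
    (hterm : ∀ v : V, ¬ GuardM G pref v ∧ ¬ GuardS G pref v ∧ ¬ GuardA G pref v) :
    ∀ v : V, Spec G pref v := by
  -- key lemma: if x proposes to y, they are married
  have key : ∀ x y : V, pref x = some y → pref y = some x := by
    intro x y hxy
    have hadj := hconf x y hxy
    by_contra hne
    rcases h : pref y with _ | w
    · exact (hterm y).1 ⟨h, x, hadj.symm, hxy⟩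
    · exact (hterm x).2.2 ⟨y, hadj, hxy, hne, by simp [h]⟩
  intro v
  rcases hv : pref v with _ | u
  · -- pref v = none; show Dead
    right
    have hnoM := (hterm v).1
    have hnoS := (hterm v).2.1
    have hforall : ∀ u : V, G.Adj v u → pref u ≠ some v := by
      intro u hu hc
      exact hnoM ⟨hv, u, hu, hc⟩
    refine ⟨hv, fun u hu => ?_⟩
    rcases h : pref u with _ | w
    · exact absurd ⟨hv, hforall, u, hu, h⟩ hnoS
    · exact ⟨w, hconf u w h, h, key u w h⟩
  · exact Or.inl ⟨u, hconf v u hv, hv, key v u hv⟩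
end

section
/- For every configuration pref and every vertex v of G, if spec(v) does not hold, then there exists a vertex w with graph distance at most 2 from v in G such that w is activable (at least one of the guards G_M(w), G_S(w), G_A(w) holds). -/
variable {V : Type*} [Fintype V] [DecidableEq V]

/-- if `spec(v)` does not hold, then some vertex at distance at
most `2` from `v` in `G` is activable. -/
theorem not_spec_activable_within_two (G : SimpleGraph V)
    (pref : V → Option V) (hconf : IsConfig G pref) (v : V)
    (hspec : ¬ Spec G pref v) :
    ∃ w : V, G.Reachable v w ∧ G.dist v w ≤ 2 ∧ Activable G pref w := by
  simp only [Spec, not_or] at hspec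
  obtain ⟨hm, hd⟩ := hspec
  cases hpv : pref v with
  | some u =>
    have hadj := hconf v u hpv
    cases hpu : pref u with
    | none =>
      refine ⟨u, hadj.reachable, ?_, Or.inl ⟨hpu, v, hadj.symm, hpv⟩⟩
      calc G.dist v u ≤ hadj.toWalk.length := SimpleGraph.dist_le _
        _ ≤ 2 := by simp
    | some w =>
      have hwv : w ≠ v := fun h => hm ⟨u, hadj, hpv, h ▸ hpu⟩
      refine ⟨v, .refl v, by simp [SimpleGraph.dist_self], Or.inr (Or.inr ⟨u, hadj, hpv, ?_, ?_⟩)⟩ <;>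
        simp [hpu, hwv]
  | none =>
    rw [Dead, not_and] at hd
    push_neg at hd
    obtain ⟨u, hadj, hmu⟩ := hd hpv
    by_cases hM : ∃ x, G.Adj v x ∧ pref x = some v
    · exact ⟨v, .refl v, by simp [SimpleGraph.dist_self], Or.inl ⟨hpv, hM⟩⟩
    · push_neg at hM
      by_cases hS : ∃ x, G.Adj v x ∧ pref x = none
      · exact ⟨v, .refl v, by simp [SimpleGraph.dist_self], Or.inr (Or.inl ⟨hpv, hM, hS⟩)⟩
      · push_neg at hS
        cases hpu : pref u with
        | none => exact absurd hpu (hS u hadj)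
        | some w =>
          have hadj_uw := hconf u w hpu
          cases hpw : pref w with
          | none =>
            refine ⟨w, (hadj.toWalk.append hadj_uw.toWalk).reachable, ?_,
              Or.inl ⟨hpw, u, hadj_uw.symm, hpu⟩⟩
            calc G.dist v w ≤ (hadj.toWalk.append hadj_uw.toWalk).length :=
                SimpleGraph.dist_le _
              _ ≤ 2 := by simp
          | some x =>
            by_cases hx : x = u
            · exact absurd ⟨w, hadj_uw, hpu, hx ▸ hpw⟩ hmu
            · refine ⟨u, hadj.reachable, ?_,
                Or.inr (Or.inr ⟨w, hadj_uw, hpu, ?_, ?_⟩)⟩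
              · calc G.dist v u ≤ hadj.toWalk.length := SimpleGraph.dist_le _
                  _ ≤ 2 := by simp
              all_goals simp [hpw, hx]
end
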